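/- Let μ : (0,∞) → ℝ be continuous and m : (0,∞) → (0,∞) be locally integrable, and define I(x) = ∫_0^x (μ(y) − μ(x)) m(y) dy (assumed finite for all x). If μ is differentiable, then I'(x) = −μ'(x)·∫_0^x m(y) dy. Consequently, if there is y₁ such that μ is increasing on (0, y₁] and strictly decreasing on [y₁, ∞), then I is decreasing on (0, y₁] and strictly increasing on [y₁, ∞), so I changes sign at most once, from nonpositive to positive. -/

import Mathlib

open Set intervalIntegral

theorem stmt4 (y₁ : ℝ) (hy₁ : 0 < y₁)
    (μ μ' m : ℝ → ℝ)
    (hμc : ContinuousOn μ (Ioi 0))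
    (hmpos : ∀ x > (0:ℝ), 0 < m x)
    (hmint : ∀ x > (0:ℝ), IntervalIntegrable m MeasureTheory.volume 0 x)
    (hμmint : ∀ x > (0:ℝ), IntervalIntegrable (fun y => μ y * m y) MeasureTheory.volume 0 x)
    (hμ' : ∀ x > (0:ℝ), HasDerivAt μ (μ' x) x)
    (I : ℝ → ℝ)
    (hI : ∀ x, I x = ∫ y in (0:ℝ)..x, (μ y - μ x) * m y)
    (hμmono : MonotoneOn μ (Ioc 0 y₁))
    (hμanti : StrictAntiOn μ (Ici y₁)) :
    (∀ x > (0:ℝ), HasDerivAt I (-(μ' x) * ∫ y in (0:ℝ)..x, m y) x) ∧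
    AntitoneOn I (Ioc 0 y₁) ∧ StrictMonoOn I (Ici y₁) ∧
    (∀ x₀ > (0:ℝ), 0 < I x₀ → ∀ x ≥ x₀, 0 < I x) := by
  -- positivity of the primitive of m
  have hBpos : ∀ a > (0:ℝ), 0 < ∫ y in (0:ℝ)..a, m y := fun a ha =>
    intervalIntegral_pos_of_pos_on (hmint a ha) (fun y hy => hmpos y hy.1) ha
  -- the splitting of I
  have hsplit : ∀ t > (0:ℝ), I t = (∫ y in (0:ℝ)..t, μ y * m y) - μ t * ∫ y in (0:ℝ)..t, m y := by
    intro t ht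
    rw [hI t]
    have : (fun y => (μ y - μ t) * m y) = fun y => μ y * m y - μ t * m y := by
      funext y; ring
    rw [this, intervalIntegral.integral_sub (hμmint t ht) ((hmint t ht).const_mul (μ t)),
      intervalIntegral.integral_const_mul]
  -- the key difference identity
  have hdiff : ∀ a > (0:ℝ), ∀ t > (0:ℝ),
      I t - I a = (∫ y in a..t, (μ y - μ t) * m y)
        + (μ a - μ t) * ∫ y in (0:ℝ)..a, m y := by
    intro a ha t ht
    have h1 : IntervalIntegrable (fun y => μ y * m y) MeasureTheory.volume a t :=
      (hμmint a ha).symm.trans (hμmint t ht)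
    have h2 : IntervalIntegrable m MeasureTheory.volume a t :=
      (hmint a ha).symm.trans (hmint t ht)
    have e1 : ∫ y in a..t, μ y * m y
        = (∫ y in (0:ℝ)..t, μ y * m y) - ∫ y in (0:ℝ)..a, μ y * m y :=
      (integral_interval_sub_left (hμmint t ht) (hμmint a ha)).symm
    have e2 : ∫ y in a..t, m y = (∫ y in (0:ℝ)..t, m y) - ∫ y in (0:ℝ)..a, m y :=
      (integral_interval_sub_left (hmint t ht) (hmint a ha)).symm
    have e3 : ∫ y in a..t, (μ y - μ t) * m y
        = (∫ y in a..t, μ y * m y) - μ t * ∫ y in a..t, m y := by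
      have : (fun y => (μ y - μ t) * m y) = fun y => μ y * m y - μ t * m y := by
        funext y; ring
      rw [this, intervalIntegral.integral_sub h1 (h2.const_mul (μ t)),
        intervalIntegral.integral_const_mul]
    rw [hsplit t ht, hsplit a ha, e3, e1, e2]; ring
  refine ⟨?_, ?_, ?_, ?_⟩
  · -- the derivative
    intro x hx
    set B : ℝ := ∫ y in (0:ℝ)..x, m y with hB
    -- derivative of the remainder term is 0
    have HR : HasDerivAt (fun t => ∫ y in x..t, (μ y - μ t) * m y) 0 x := by
      rw [hasDerivAt_iff_isLittleO]
      simp only [intervalIntegral.integral_same, smul_zero, sub_zero]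
      rw [Asymptotics.isLittleO_iff]
      intro c hc
      set C : ℝ := |μ' x| + 1 with hC
      have hCpos : 0 < C := by positivity
      -- local Lipschitz-type bound from differentiability at x
      have hL := (hasDerivAt_iff_isLittleO.1 (hμ' x hx)).def one_pos
      have hLip : ∀ᶠ y in nhds x, |μ y - μ x| ≤ C * |y - x| := by
        filter_upwards [hL] with y hy
        have h1 : ‖μ y - μ x - (y - x) • μ' x‖ ≤ 1 * ‖y - x‖ := hy
        simp only [smul_eq_mul, Real.norm_eq_abs, one_mul] at h1
        have h2 : |μ y - μ x| ≤ |μ y - μ x - (y - x) * μ' x| + |(y - x) * μ' x| := by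
          have := abs_add_le (μ y - μ x - (y - x) * μ' x) ((y - x) * μ' x)
          simpa using this
        have h3 : |(y - x) * μ' x| = |y - x| * |μ' x| := abs_mul _ _
        rw [hC]; nlinarith [abs_nonneg (y - x)]
      have hIoi : ∀ᶠ y in nhds x, 0 < y :=
        Filter.eventually_of_mem (Ioi_mem_nhds hx) (fun y hy => hy)
      obtain ⟨r, hr0, hrball⟩ := Metric.eventually_nhds_iff.1 (hLip.and hIoi)
      -- continuity of the primitive of m at x
      have hx2 : (0:ℝ) < x / 2 := by linarith
      have hxint : IntervalIntegrable m MeasureTheory.volume (x/2) (x+1) :=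
        (hmint (x/2) hx2).symm.trans (hmint (x+1) (by linarith))
      have hMcont : ContinuousWithinAt (fun t => ∫ y in x..t, m y) (Icc (x/2) (x+1)) x := by
        apply intervalIntegral.continuousWithinAt_primitive (MeasureTheory.measure_singleton x)
        rw [min_eq_right (by linarith : x/2 ≤ x), max_eq_right (by linarith : x ≤ x+1)]
        exact hxint
      have hMcontAt : ContinuousAt (fun t => ∫ y in x..t, m y) x :=
        hMcont.continuousAt (Icc_mem_nhds (by linarith) (by linarith))
      set ε : ℝ := c / (2 * C) with hε
      have hεpos : 0 < ε := by positivity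
      have hM : ∀ᶠ t in nhds x, |∫ y in x..t, m y| < ε := by
        have := hMcontAt.tendsto
        rw [intervalIntegral.integral_same] at this
        have := this (Metric.ball_mem_nhds 0 hεpos)
        filter_upwards [this] with t ht
        simpa [Real.dist_eq] using ht
      filter_upwards [Metric.ball_mem_nhds x hr0, hM] with t htr hMt
      have htx : |t - x| < r := by rwa [Metric.mem_ball, Real.dist_eq] at htr
      have htprop := hrball (show dist t x < r by rwa [Real.dist_eq])
      have htpos : 0 < t := htprop.2
      have hm_xt : IntervalIntegrable m MeasureTheory.volume x t :=
        (hmint x hx).symm.trans (hmint t htpos)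
      -- pointwise bound on the unordered interval
      have hptwise : ∀ y ∈ uIoc x t, ‖(μ y - μ t) * m y‖ ≤ (2 * C * |t - x|) * m y := by
        intro y hy
        have hyx : |y - x| ≤ |t - x| := by
          rcases le_total x t with h | h
          · rw [uIoc_of_le h] at hy
            rw [abs_of_nonneg (by linarith [hy.1] : (0:ℝ) ≤ y - x),
              abs_of_nonneg (by linarith : (0:ℝ) ≤ t - x)]
            linarith [hy.2]
          · rw [uIoc_of_ge h] at hy
            rw [abs_of_nonpos (by linarith [hy.2] : y - x ≤ 0),
              abs_of_nonpos (by linarith : t - x ≤ 0)]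
            linarith [hy.1]
        have hyprop := hrball (by rw [Real.dist_eq]; exact lt_of_le_of_lt hyx htx)
        have hym : 0 < m y := hmpos y hyprop.2
        have hμyt : |μ y - μ t| ≤ 2 * C * |t - x| := by
          have h1 : |μ y - μ x| ≤ C * |y - x| := hyprop.1
          have h2 : |μ t - μ x| ≤ C * |t - x| := htprop.1
          have h3 : |μ y - μ t| ≤ |μ y - μ x| + |μ t - μ x| := by
            have := abs_sub (μ y - μ x) (μ t - μ x)
            calc |μ y - μ t| = |(μ y - μ x) - (μ t - μ x)| := by congr 1; ring
              _ ≤ |μ y - μ x| + |μ t - μ x| := abs_sub _ _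
          nlinarith [mul_le_mul_of_nonneg_left hyx hCpos.le]
        rw [Real.norm_eq_abs, abs_mul, abs_of_pos hym]
        exact mul_le_mul_of_nonneg_right hμyt hym.le
      have hae : ∀ᵐ y ∂(MeasureTheory.volume.restrict (uIoc x t)),
          ‖(μ y - μ t) * m y‖ ≤ (2 * C * |t - x|) * m y := by
        rw [MeasureTheory.ae_restrict_iff' measurableSet_uIoc]
        exact MeasureTheory.ae_of_all _ hptwise
      have hbound := intervalIntegral.norm_integral_le_abs_of_norm_le hae
        (hm_xt.const_mul (2 * C * |t - x|))
      rw [intervalIntegral.integral_const_mul, abs_mul] at hbound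
      have habs : abs (2 * C * |t - x|) = 2 * C * |t - x| := abs_of_nonneg (by positivity)
      rw [habs] at hbound
      calc ‖∫ y in x..t, (μ y - μ t) * m y‖
          ≤ 2 * C * |t - x| * |∫ y in x..t, m y| := hbound
        _ ≤ 2 * C * |t - x| * ε := by
            apply mul_le_mul_of_nonneg_left hMt.le; positivity
        _ = c * |t - x| := by rw [hε]; field_simp
        _ = c * ‖t - x‖ := by rw [Real.norm_eq_abs]
    -- derivative of the linear term
    have H2 : HasDerivAt (fun t => (μ x - μ t) * B) (-(μ' x) * B) x :=
      ((hμ' x hx).const_sub (μ x)).mul_const B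
    have H3 : HasDerivAt (fun t => I x + ((∫ y in x..t, (μ y - μ t) * m y) + (μ x - μ t) * B))
        (-(μ' x) * B) x := by
      have := (HR.add H2).const_add (I x)
      simpa using this
    apply H3.congr_of_eventuallyEq
    filter_upwards [Ioi_mem_nhds hx] with t ht
    have := hdiff x hx t ht
    rw [← hB] at this
    linarith
  · -- antitone on Ioc 0 y₁
    intro a ha b hb hab
    have hint : IntervalIntegrable (fun y => (μ y - μ b) * m y) MeasureTheory.volume a b := by
      have h1 : IntervalIntegrable (fun y => μ y * m y) MeasureTheory.volume a b :=
        (hμmint a ha.1).symm.trans (hμmint b hb.1)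
      have h2 : IntervalIntegrable m MeasureTheory.volume a b :=
        (hmint a ha.1).symm.trans (hmint b hb.1)
      have : (fun y => (μ y - μ b) * m y) = fun y => μ y * m y - μ b * m y := by
        funext y; ring
      rw [this]; exact h1.sub (h2.const_mul (μ b))
    have hterm1 : (∫ y in a..b, (μ y - μ b) * m y) ≤ 0 := by
      have : (0:ℝ) ≤ ∫ y in a..b, -((μ y - μ b) * m y) := by
        apply intervalIntegral.integral_nonneg hab
        intro u hu
        have hu0 : u ∈ Ioc 0 y₁ := ⟨lt_of_lt_of_le ha.1 hu.1, le_trans hu.2 hb.2⟩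
        have : μ u ≤ μ b := hμmono hu0 hb (hu.2)
        have hmu : 0 < m u := hmpos u hu0.1
        nlinarith
      rw [intervalIntegral.integral_neg] at this
      linarith
    have hterm2 : (μ a - μ b) * ∫ y in (0:ℝ)..a, m y ≤ 0 := by
      have hμab : μ a ≤ μ b := hμmono ha hb hab
      have := hBpos a ha.1
      nlinarith
    have := hdiff a ha.1 b hb.1
    linarith
  · -- strict mono on Ici y₁
    intro a ha b hb hab
    have ha0 : (0:ℝ) < a := lt_of_lt_of_le hy₁ ha
    have hb0 : (0:ℝ) < b := lt_of_lt_of_le hy₁ hb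
    have hterm1 : (0:ℝ) ≤ ∫ y in a..b, (μ y - μ b) * m y := by
      apply intervalIntegral.integral_nonneg hab.le
      intro u hu
      have hu0 : (0:ℝ) < u := lt_of_lt_of_le ha0 hu.1
      have huI : u ∈ Ici y₁ := le_trans ha hu.1
      have : μ b ≤ μ u := by
        rcases eq_or_lt_of_le hu.2 with h | h
        · rw [h]
        · exact (hμanti huI hb h).le
      have hmu : 0 < m u := hmpos u hu0
      nlinarith
    have hterm2 : 0 < (μ a - μ b) * ∫ y in (0:ℝ)..a, m y := by
      have hμab : μ b < μ a := hμanti ha hb hab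
      have := hBpos a ha0
      nlinarith
    have := hdiff a ha0 b hb0
    linarith
  · -- sign change at most once
    intro x₀ hx₀ hIx₀ x hx
    -- first, x₀ must exceed y₁
    have hx₀y₁ : y₁ < x₀ := by
      by_contra h
      push_neg at h
      have : I x₀ ≤ 0 := by
        have hae : ∀ᵐ y ∂(MeasureTheory.volume.restrict (Icc (0:ℝ) x₀)),
            0 ≤ -((μ y - μ x₀) * m y) := by
          have h0 : ∀ᵐ (y : ℝ) ∂MeasureTheory.volume, y ≠ 0 := by
            rw [MeasureTheory.ae_iff]
            have : {y : ℝ | ¬y ≠ 0} = {0} := by ext y; simp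
            rw [this]; exact Real.volume_singleton
          filter_upwards [MeasureTheory.ae_restrict_mem measurableSet_Icc,
            MeasureTheory.ae_restrict_of_ae h0] with y hy hy0
          have hy0' : 0 < y := lt_of_le_of_ne hy.1 (Ne.symm hy0)
          have hyI : y ∈ Ioc 0 y₁ := ⟨hy0', le_trans hy.2 h⟩
          have : μ y ≤ μ x₀ := hμmono hyI ⟨hx₀, h⟩ hy.2
          have hmy : 0 < m y := hmpos y hy0'
          nlinarith
        have : (0:ℝ) ≤ ∫ y in (0:ℝ)..x₀, -((μ y - μ x₀) * m y) :=
          intervalIntegral.integral_nonneg_of_ae_restrict hx₀.le hae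
        rw [intervalIntegral.integral_neg] at this
        rw [hI x₀]; linarith
      linarith
    -- now use strict monotonicity on Ici y₁
    rcases eq_or_lt_of_le hx with h | h
    · rw [← h]; exact hIx₀
    · have hmono : StrictMonoOn I (Ici y₁) := by
        intro a ha b hb hab
        have ha0 : (0:ℝ) < a := lt_of_lt_of_le hy₁ ha
        have hb0 : (0:ℝ) < b := lt_of_lt_of_le hy₁ hb
        have hterm1 : (0:ℝ) ≤ ∫ y in a..b, (μ y - μ b) * m y := by
          apply intervalIntegral.integral_nonneg hab.le
          intro u hu
          have hu0 : (0:ℝ) < u := lt_of_lt_of_le ha0 hu.1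
          have huI : u ∈ Ici y₁ := le_trans ha hu.1
          have : μ b ≤ μ u := by
            rcases eq_or_lt_of_le hu.2 with h | h
            · rw [h]
            · exact (hμanti huI hb h).le
          have hmu : 0 < m u := hmpos u hu0
          nlinarith
        have hterm2 : 0 < (μ a - μ b) * ∫ y in (0:ℝ)..a, m y := by
          have hμab : μ b < μ a := hμanti ha hb hab
          have := hBpos a ha0
          nlinarith
        have := hdiff a ha0 b hb0
        linarith
      have := hmono (le_of_lt hx₀y₁) (le_trans hx₀y₁.le hx) h
      linarith
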